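/- Every regular paratopological group is completely regular. That is, if G is a group equipped with a topology for which multiplication (x,y) ↦ x*y is jointly continuous, and G is a regular topological space, then G is completely regular. -/

import Mathlib

open Set Topology Filter unitInterval Pointwise

namespace ParaCR

/-! Auxiliary machinery: dyadic values of lists of binary-digit positions. -/

noncomputable def val (l : List ℕ) : ℝ := (l.map fun i => ((2 : ℝ))⁻¹ ^ i).sum

@[simp] lemma val_nil : val [] = 0 := rfl

@[simp] lemma val_cons (n : ℕ) (t : List ℕ) : val (n :: t) = (2 : ℝ)⁻¹ ^ n + val t := rfl

@[simp] lemma val_append (l₁ l₂ : List ℕ) : val (l₁ ++ l₂) = val l₁ + val l₂ := by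
  unfold val
  rw [List.map_append, List.sum_append]

lemma val_nonneg (l : List ℕ) : 0 ≤ val l := by
  induction l with
  | nil => simp
  | cons n t ih =>
    have h : (0 : ℝ) ≤ (2 : ℝ)⁻¹ ^ n := by positivity
    rw [val_cons]; linarith

lemma pow_half_anti {m n : ℕ} (h : m ≤ n) : ((2 : ℝ)⁻¹) ^ n ≤ ((2 : ℝ)⁻¹) ^ m :=
  pow_le_pow_of_le_one (by norm_num) (by norm_num) h

lemma val_lt (l : List ℕ) (hl : l.Pairwise (· < ·)) (n : ℕ) (hn : ∀ i ∈ l, n ≤ i) :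
    val l < 2 * (2 : ℝ)⁻¹ ^ n := by
  induction l generalizing n with
  | nil =>
    rw [val_nil]; positivity
  | cons m t ih =>
    obtain ⟨hmt, ht⟩ := List.pairwise_cons.mp hl
    have hm : n ≤ m := hn m (by simp)
    have h1 : val t < 2 * (2 : ℝ)⁻¹ ^ (m + 1) := ih ht (m + 1) fun i hi => hmt i hi
    have h2 : 2 * (2 : ℝ)⁻¹ ^ (m + 1) = (2 : ℝ)⁻¹ ^ m := by
      rw [pow_succ]; ring
    have h3 : (2 : ℝ)⁻¹ ^ m ≤ (2 : ℝ)⁻¹ ^ n := pow_half_anti hm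
    rw [val_cons]
    linarith

lemma val_lt_one (l : List ℕ) (hl : l.Pairwise (· < ·)) (hn : ∀ i ∈ l, 1 ≤ i) :
    val l < 1 := by
  have := val_lt l hl 1 hn
  norm_num at this
  linarith

/-- Every dyadic rational `k/2^n` in `(0,1)` is the value of a suitable list. -/
lemma dyadic_rep : ∀ n k : ℕ, 1 ≤ k → k < 2 ^ n →
    ∃ l : List ℕ, l.Pairwise (· < ·) ∧ (∀ i ∈ l, 1 ≤ i ∧ i ≤ n) ∧ l ≠ [] ∧
      val l = (k : ℝ) / 2 ^ n := by
  intro n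
  induction n with
  | zero => intro k h1 h2; omega
  | succ n ih =>
    intro k h1 h2
    rcases Nat.even_or_odd k with ⟨j, hj⟩ | ⟨j, hj⟩
    · -- k = j + j
      have hj1 : 1 ≤ j := by omega
      have hj2 : j < 2 ^ n := by
        have : 2 ^ (n + 1) = 2 * 2 ^ n := by rw [pow_succ]; ring
        omega
      obtain ⟨l, hp, hb, hne, hv⟩ := ih j hj1 hj2
      refine ⟨l, hp, fun i hi => ⟨(hb i hi).1, (hb i hi).2.trans (by omega)⟩, hne, ?_⟩
      rw [hv, hj]
      have h2n : (2 : ℝ) ^ n ≠ 0 := by positivity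
      rw [pow_succ]
      push_cast
      field_simp
      try ring
    · -- k = 2*j + 1
      by_cases hj0 : j = 0
      · refine ⟨[n + 1], List.pairwise_singleton _ _, ?_, by simp, ?_⟩
        · intro i hi; simp at hi; omega
        · rw [hj, hj0]
          simp only [val, List.map_cons, List.map_nil, List.sum_cons, List.sum_nil,
            add_zero, inv_pow]
          norm_num
      · have hj1 : 1 ≤ j := by omega
        have hj2 : j < 2 ^ n := by
          have : 2 ^ (n + 1) = 2 * 2 ^ n := by rw [pow_succ]; ring
          omega
        obtain ⟨l, hp, hb, hne, hv⟩ := ih j hj1 hj2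
        refine ⟨l ++ [n + 1], ?_, ?_, by simp, ?_⟩
        · rw [List.pairwise_append]
          refine ⟨hp, List.pairwise_singleton _ _, ?_⟩
          intro a ha b hb'
          simp at hb'
          subst hb'
          exact Nat.lt_succ_of_le (hb a ha).2
        · intro i hi
          rcases List.mem_append.mp hi with h | h
          · exact ⟨(hb i h).1, (hb i h).2.trans (by omega)⟩
          · simp at h; omega
        · rw [val_append, hv, hj]
          simp only [val, List.map_cons, List.map_nil, List.sum_cons, List.sum_nil, add_zero]
          rw [inv_pow, pow_succ]
          push_cast
          field_simp
          try ring

/-- Density of representable dyadics in `(0,1)`. -/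
lemma dyadic_dense {a b : ℝ} (ha : 0 ≤ a) (hab : a < b) (hb : b ≤ 1) :
    ∃ l : List ℕ, l.Pairwise (· < ·) ∧ (∀ i ∈ l, 1 ≤ i) ∧ l ≠ [] ∧
      a < val l ∧ val l < b := by
  obtain ⟨n, hn⟩ := exists_pow_lt_of_lt_one (x := b - a) (y := (2 : ℝ)⁻¹)
    (by linarith) (by norm_num)
  have h2n : (0 : ℝ) < 2 ^ n := by positivity
  have hinv : ((2 : ℝ)⁻¹) ^ n = 1 / 2 ^ n := by rw [inv_pow]; ring
  set k : ℕ := (⌊a * 2 ^ n⌋).toNat + 1 with hk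
  have hfl0 : (0 : ℤ) ≤ ⌊a * 2 ^ n⌋ := Int.floor_nonneg.mpr (by positivity)
  have hcast : ((⌊a * 2 ^ n⌋.toNat : ℕ) : ℝ) = ((⌊a * 2 ^ n⌋ : ℤ) : ℝ) := by
    exact_mod_cast Int.toNat_of_nonneg hfl0
  have hkc : (k : ℝ) = ((⌊a * 2 ^ n⌋ : ℤ) : ℝ) + 1 := by
    rw [hk]
    push_cast
    linarith [hcast]
  have hlow : a * 2 ^ n < (k : ℝ) := by
    have := Int.lt_floor_add_one (a * 2 ^ n)
    rw [hkc]
    linarith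
  have hhigh : (k : ℝ) ≤ a * 2 ^ n + 1 := by
    have := Int.floor_le (a * 2 ^ n)
    rw [hkc]
    linarith
  have hk1 : 1 ≤ k := by omega
  have h1' : (1 : ℝ) < (b - a) * 2 ^ n := by
    rw [hinv] at hn
    exact (div_lt_iff₀ h2n).mp hn
  have hkb : (k : ℝ) / 2 ^ n < b := by
    rw [div_lt_iff₀ h2n]
    nlinarith
  have hka : a < (k : ℝ) / 2 ^ n := by
    rw [lt_div_iff₀ h2n]
    linarith
  have hk2 : k < 2 ^ n := by
    have hkr : (k : ℝ) < 2 ^ n := by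
      rw [div_lt_iff₀ h2n] at hkb
      nlinarith
    exact_mod_cast hkr
  obtain ⟨l, hp, hbnd, hne, hv⟩ := dyadic_rep n k hk1 hk2
  exact ⟨l, hp, fun i hi => (hbnd i hi).1, hne, by rw [hv]; exact hka, by rw [hv]; exact hkb⟩

/-! Group-theoretic part. -/

variable {G : Type*} [Group G] [TopologicalSpace G] [ContinuousMul G]

lemma closure_mul_subset (A B : Set G) : closure A * B ⊆ closure (A * B) := by
  rintro x ⟨a, ha, b, hb, rfl⟩
  have hc : Continuous fun y : G => y * b := continuous_id.mul continuous_const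
  have h1 : a * b ∈ closure ((fun y : G => y * b) '' A) :=
    image_closure_subset_closure_image hc ⟨a, ha, rfl⟩
  refine closure_mono ?_ h1
  rintro _ ⟨y, hy, rfl⟩
  exact Set.mul_mem_mul hy hb

/-- Product of the sets `U n` along a list. -/
def Dset (U : ℕ → Set G) : List ℕ → Set G
  | [] => {1}
  | n :: t => U n * Dset U t

lemma one_mem_Dset {U : ℕ → Set G} (h2 : ∀ n, (1 : G) ∈ U n) :
    ∀ l, (1 : G) ∈ Dset U l := by
  intro l
  induction l with
  | nil => exact rfl
  | cons n t ih => exact (show (1 : G) ∈ U n * Dset U t by simpa using Set.mul_mem_mul (h2 n) ih)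

lemma Dset_append {U : ℕ → Set G} (l₁ l₂ : List ℕ) :
    Dset U (l₁ ++ l₂) = Dset U l₁ * Dset U l₂ := by
  induction l₁ with
  | nil =>
    show Dset U l₂ = Dset U [] * Dset U l₂
    exact (one_mul (Dset U l₂)).symm
  | cons n t ih =>
    show U n * Dset U (t ++ l₂) = U n * Dset U t * Dset U l₂
    rw [ih, mul_assoc]

section Chain

variable {U : ℕ → Set G}
variable (h2 : ∀ n, (1 : G) ∈ U n)
variable (h3 : ∀ n, closure (U (n + 1)) * closure (U (n + 1)) ⊆ U n)

include h2 h3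

lemma clU_succ_subset : ∀ n, closure (U (n + 1)) ⊆ U n := by
  intro n x hx
  have : x * 1 ∈ U n := h3 n (Set.mul_mem_mul hx (subset_closure (h2 (n + 1))))
  simpa using this

lemma U_succ_subset : ∀ n, U (n + 1) ⊆ U n := fun n =>
  (subset_closure).trans (clU_succ_subset h2 h3 n)

lemma U_mono : ∀ {m n : ℕ}, m ≤ n → U n ⊆ U m := by
  intro m n h
  induction n with
  | zero => have : m = 0 := Nat.le_zero.mp h; subst this; exact subset_rfl
  | succ n ih =>
    rcases Nat.lt_or_ge m (n + 1) with h' | h'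
    · exact (U_succ_subset h2 h3 n).trans (ih (Nat.lt_succ_iff.mp h'))
    · have : m = n + 1 := le_antisymm h h'
      subst this; exact subset_rfl

lemma Dset_head_subset :
    ∀ (t : List ℕ) (n : ℕ), 1 ≤ n → (∀ i ∈ t, n < i) → t.Pairwise (· < ·) →
      Dset U (n :: t) ⊆ U (n - 1) := by
  intro t
  induction t with
  | nil =>
    intro n hn _ _
    have he : Dset U [n] = U n := by
      show U n * ({1} : Set G) = U n
      simp
    rw [he]
    have : U n ⊆ closure (U n) := subset_closure
    have hcl : closure (U n) ⊆ U (n - 1) := by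
      have : n - 1 + 1 = n := by omega
      rw [← this]
      exact clU_succ_subset h2 h3 (n - 1)
    exact subset_closure.trans hcl
  | cons m t' ih =>
    intro n hn hgt hp
    obtain ⟨hmt', hp'⟩ := List.pairwise_cons.mp hp
    have hnm : n < m := hgt m (by simp)
    have hsub : Dset U (m :: t') ⊆ U (m - 1) :=
      ih m (by omega) (fun i hi => hmt' i hi) hp'
    have hsub2 : U (m - 1) ⊆ U n := U_mono h2 h3 (by omega)
    have hstep : Dset U (n :: m :: t') ⊆ U n * U n := by
      show U n * Dset U (m :: t') ⊆ U n * U n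
      exact Set.mul_subset_mul_left (hsub.trans hsub2)
    refine hstep.trans ?_
    have : U n * U n ⊆ closure (U n) * closure (U n) :=
      Set.mul_subset_mul subset_closure subset_closure
    refine this.trans ?_
    have hn' : n - 1 + 1 = n := by omega
    rw [← hn']
    exact h3 (n - 1)

lemma Dset_mono :
    ∀ (l' l : List ℕ), l.Pairwise (· < ·) → l'.Pairwise (· < ·) →
      (∀ i ∈ l, 1 ≤ i) → (∀ i ∈ l', 1 ≤ i) → val l < val l' →
      Dset U l ⊆ Dset U l' := by
  intro l'
  induction l' with
  | nil =>
    intro l _ _ _ _ hv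
    exact absurd hv (not_lt.mpr (by simpa using val_nonneg l))
  | cons n' t' ih =>
    intro l hl hl' h1l h1l' hv
    obtain ⟨hn't', hpt'⟩ := List.pairwise_cons.mp hl'
    cases l with
    | nil =>
      intro x hx
      have hx1 : x = 1 := hx
      subst hx1
      exact one_mem_Dset h2 (n' :: t')
    | cons n t =>
      obtain ⟨hnt, hpt⟩ := List.pairwise_cons.mp hl
      rcases lt_trichotomy n' n with hc | hc | hc
      · -- n' < n : Dset (n::t) ⊆ U (n-1) ⊆ U n' ⊆ U n' * Dset t'
        have hs1 : Dset U (n :: t) ⊆ U (n - 1) :=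
          Dset_head_subset h2 h3 t n (h1l n (by simp)) (fun i hi => hnt i hi) hpt
        have hs2 : U (n - 1) ⊆ U n' := U_mono h2 h3 (by omega)
        intro x hx
        have hxU : x ∈ U n' := hs2 (hs1 hx)
        have : x * 1 ∈ U n' * Dset U t' :=
          Set.mul_mem_mul hxU (one_mem_Dset h2 t')
        show x ∈ U n' * Dset U t'
        simpa using this
      · -- n' = n
        subst hc
        have hvt : val t < val t' := by
          rw [val_cons, val_cons] at hv
          linarith
        show U n' * Dset U t ⊆ U n' * Dset U t'
        exact Set.mul_subset_mul_left
          (ih t hpt hpt' (fun i hi => h1l i (by simp [hi]))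
            (fun i hi => h1l' i (by simp [hi])) hvt)
      · -- n < n' : contradiction
        exfalso
        have hb : val (n' :: t') < 2 * (2 : ℝ)⁻¹ ^ n' :=
          val_lt _ hl' n' (by
            intro i hi
            rcases List.mem_cons.mp hi with h | h
            · omega
            · exact le_of_lt (hn't' i h))
        have h2' : 2 * (2 : ℝ)⁻¹ ^ n' ≤ (2 : ℝ)⁻¹ ^ n := by
          have : 2 * (2 : ℝ)⁻¹ ^ (n + 1) = (2 : ℝ)⁻¹ ^ n := by rw [pow_succ]; ring
          calc 2 * (2 : ℝ)⁻¹ ^ n' ≤ 2 * (2 : ℝ)⁻¹ ^ (n + 1) := by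
                have := pow_half_anti (show n + 1 ≤ n' by omega)
                linarith
            _ = (2 : ℝ)⁻¹ ^ n := this
        have hge : (2 : ℝ)⁻¹ ^ n ≤ val (n :: t) := by
          rw [val_cons]
          have := val_nonneg t
          linarith
        linarith

end Chain

lemma le_foldr_max (l : List ℕ) : ∀ i ∈ l, i ≤ l.foldr max 0 := by
  induction l with
  | nil => intro i hi; simp at hi
  | cons a t ih =>
    intro i hi
    rcases List.mem_cons.mp hi with h | h
    · subst h; exact le_max_left _ _
    · exact (ih i h).trans (le_max_right _ _)

end ParaCR

open ParaCR Set Topology Filter unitInterval Pointwise in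
/-- Corollary `r1`. Every regular paratopological group is
completely regular. -/
theorem completelyRegular_of_regular_paratopologicalGroup {G : Type*} [Group G]
    [TopologicalSpace G] [ContinuousMul G] [RegularSpace G] :
    CompletelyRegularSpace G := by
  classical
  refine ⟨fun x₀ K hK hx₀ => ?_⟩
  -- Work near the identity: O is the translate of Kᶜ.
  set O : Set G := (fun y => x₀ * y) ⁻¹' Kᶜ with hOdef
  have hOopen : IsOpen O := hK.isOpen_compl.preimage (continuous_const.mul continuous_id)
  have hO1 : (1 : G) ∈ O := by simpa [hOdef] using hx₀
  -- The inductive step producing the chain of neighborhoods.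
  have step : ∀ S : {S : Set G // IsOpen S ∧ (1 : G) ∈ S},
      ∃ T : {T : Set G // IsOpen T ∧ (1 : G) ∈ T},
        closure T.1 * closure T.1 ⊆ S.1 := by
    rintro ⟨S, hSopen, hS1⟩
    obtain ⟨V, hVopen, hV1, hVV⟩ := exists_open_nhds_one_mul_subset (hSopen.mem_nhds hS1)
    obtain ⟨W, hWnhd, hWclosed, hWV⟩ := exists_mem_nhds_isClosed_subset (hVopen.mem_nhds hV1)
    refine ⟨⟨interior W, isOpen_interior, mem_interior_iff_mem_nhds.mpr hWnhd⟩, ?_⟩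
    have h1 : closure (interior W) ⊆ V := by
      refine (closure_mono interior_subset).trans ?_
      rw [hWclosed.closure_eq]
      exact hWV
    rintro x ⟨a, ha, b, hb, rfl⟩
    exact hVV (Set.mul_mem_mul (h1 ha) (h1 hb))
  choose g hg using step
  set u : ℕ → {S : Set G // IsOpen S ∧ (1 : G) ∈ S} :=
    fun n => Nat.rec (g ⟨O, hOopen, hO1⟩) (fun _ p => g p) n with hu
  set U : ℕ → Set G := fun n => (u n).1 with hUdef
  have hU1 : ∀ n, IsOpen (U n) := fun n => (u n).2.1
  have hU2 : ∀ n, (1 : G) ∈ U n := fun n => (u n).2.2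
  have hU3 : ∀ n, closure (U (n + 1)) * closure (U (n + 1)) ⊆ U n := fun n => hg (u n)
  have hU0cl : closure (U 0) ⊆ O := by
    intro x hx
    have h := hg ⟨O, hOopen, hO1⟩
    have hx1 : x * 1 ∈ closure (U 0) * closure (U 0) :=
      Set.mul_mem_mul hx (subset_closure (hU2 0))
    rw [mul_one] at hx1
    exact h hx1
  -- the family of "dyadic" sets and the function f
  set D : List ℕ → Set G := Dset U with hDdef
  set SS : G → Set ℝ := fun y =>
    insert 1 {r | ∃ l : List ℕ, l.Pairwise (· < ·) ∧ (∀ i ∈ l, 1 ≤ i) ∧ l ≠ [] ∧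
      val l = r ∧ y ∈ closure (D l)} with hSSdef
  have hSne : ∀ y, (SS y).Nonempty := fun y => ⟨1, mem_insert _ _⟩
  have hSbdd : ∀ y, BddBelow (SS y) := by
    intro y
    refine ⟨0, ?_⟩
    rintro r (rfl | ⟨l, _, _, _, rfl, _⟩)
    · norm_num
    · exact val_nonneg l
  set f : G → ℝ := fun y => sInf (SS y) with hfdef
  have hf0 : ∀ y, 0 ≤ f y := by
    intro y
    refine le_csInf (hSne y) ?_
    rintro r (rfl | ⟨l, _, _, _, rfl, _⟩)
    · norm_num
    · exact val_nonneg l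
  have hf1 : ∀ y, f y ≤ 1 := fun y => csInf_le (hSbdd y) (mem_insert _ _)
  -- value at the identity
  have hfone : f 1 = 0 := by
    refine le_antisymm ?_ (hf0 1)
    by_contra h
    push_neg at h
    obtain ⟨n, hn⟩ := exists_pow_lt_of_lt_one (x := f 1) (y := (2 : ℝ)⁻¹) h (by norm_num)
    have hmem : ((2 : ℝ)⁻¹ ^ (n + 1)) ∈ SS 1 := by
      refine Or.inr ⟨[n + 1], List.pairwise_singleton _ _, by simp, by simp, by simp [val], ?_⟩
      refine subset_closure ?_
      exact one_mem_Dset hU2 [n + 1]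
    have hle : f 1 ≤ (2 : ℝ)⁻¹ ^ (n + 1) := csInf_le (hSbdd 1) hmem
    have hlt : ((2 : ℝ)⁻¹) ^ (n + 1) ≤ ((2 : ℝ)⁻¹) ^ n := pow_half_anti (by omega)
    linarith
  -- f equals 1 outside closure (U 0)
  have hfK : ∀ y : G, y ∉ O → f y = 1 := by
    intro y hy
    refine le_antisymm (hf1 y) ?_
    refine le_csInf (hSne y) ?_
    rintro r (rfl | ⟨l, hp, h1s, hne, rfl, hycl⟩)
    · exact le_rfl
    · exfalso
      cases l with
      | nil => exact hne rfl
      | cons n t =>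
        have hs1 : D (n :: t) ⊆ U (n - 1) :=
          Dset_head_subset hU2 hU3 t n (h1s n (by simp))
            (fun i hi => (List.pairwise_cons.mp hp).1 i hi)
            (List.pairwise_cons.mp hp).2
        have hs2 : U (n - 1) ⊆ U 0 := U_mono hU2 hU3 (Nat.zero_le _)
        have : y ∈ closure (U 0) := closure_mono (hs1.trans hs2) hycl
        exact hy (hU0cl this)
  -- continuity of f
  have hfcont : Continuous f := by
    rw [continuous_iff_continuousAt]
    intro x
    rw [ContinuousAt, Metric.tendsto_nhds]
    intro ε hε
    -- upper estimate
    have hup : ∀ᶠ y in 𝓝 x, f y < f x + ε := by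
      have hlt : sInf (SS x) < f x + ε / 2 := by
        have h : f x < f x + ε / 2 := by linarith
        exact h
      obtain ⟨r, hr, hrlt⟩ := exists_lt_of_csInf_lt (hSne x) hlt
      rcases hr with rfl | ⟨l, hp, h1s, hne, rfl, hxcl⟩
      · -- r = 1 : f y ≤ 1 < f x + ε/2 everywhere
        refine Filter.Eventually.of_forall fun y => ?_
        have := hf1 y
        linarith
      · -- r = val l
        obtain ⟨m₀, hm₀⟩ := exists_pow_lt_of_lt_one (x := ε / 2) (y := (2 : ℝ)⁻¹)
          (by linarith) (by norm_num)
        set m : ℕ := max (l.foldr max 0 + 1) (max 1 m₀) with hm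
        have hm1 : 1 ≤ m := le_trans (le_max_left _ _) (le_max_right _ _)
        have hmgt : ∀ i ∈ l, i < m := by
          intro i hi
          have := le_foldr_max l i hi
          have : i < l.foldr max 0 + 1 := by omega
          exact lt_of_lt_of_le this (le_max_left _ _)
        have hmsmall : (2 : ℝ)⁻¹ ^ m < ε / 2 :=
          lt_of_le_of_lt (pow_half_anti (le_trans (le_max_right _ _) (le_max_right _ _))) hm₀
        set l' : List ℕ := l ++ [m] with hl'
        have hp' : l'.Pairwise (· < ·) := by
          rw [hl', List.pairwise_append]
          refine ⟨hp, List.pairwise_singleton _ _, ?_⟩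
          intro a ha b hb
          simp at hb
          subst hb
          exact hmgt a ha
        have h1s' : ∀ i ∈ l', 1 ≤ i := by
          intro i hi
          rcases List.mem_append.mp hi with h | h
          · exact h1s i h
          · simp at h; omega
        have hval' : val l' = val l + (2 : ℝ)⁻¹ ^ m := by
          rw [hl', val_append]; simp [val]
        have hDl' : D l * U m ⊆ D l' := by
          rw [hl', hDdef, Dset_append]
          refine Set.mul_subset_mul_left ?_
          show U m ⊆ U m * Dset U []
          intro z hz
          simpa using Set.mul_mem_mul hz (one_mem_Dset hU2 [])
        set N : Set G := (fun y => x⁻¹ * y) ⁻¹' U m with hN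
        have hNmem : N ∈ 𝓝 x := by
          refine ((hU1 m).preimage (continuous_const.mul continuous_id)).mem_nhds ?_
          show x⁻¹ * x ∈ U m
          simpa using hU2 m
        refine Filter.eventually_of_mem hNmem fun y hy => ?_
        have hyU : x⁻¹ * y ∈ U m := hy
        have hymem : y ∈ closure (D l) * U m := by
          have := Set.mul_mem_mul hxcl hyU
          simpa [mul_inv_cancel_left] using this
        have hycl' : y ∈ closure (D l') :=
          closure_mono hDl' ((closure_mul_subset (D l) (U m)) hymem)
        have hmem' : val l' ∈ SS y :=
          Or.inr ⟨l', hp', h1s', by simp [hl'], rfl, hycl'⟩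
        have hfy : f y ≤ val l' := csInf_le (hSbdd y) hmem'
        rw [hval'] at hfy
        linarith
    -- lower estimate
    have hlow : ∀ᶠ y in 𝓝 x, f x - ε < f y := by
      by_cases hneg : f x - ε < 0
      · exact Filter.Eventually.of_forall fun y => lt_of_lt_of_le hneg (hf0 y)
      · push_neg at hneg
        have hfx1 : f x ≤ 1 := hf1 x
        obtain ⟨l₀, hp₀, h1s₀, hne₀, hgt₀, hlt₀⟩ :=
          dyadic_dense (a := f x - ε) (b := f x) hneg (by linarith) hfx1
        have hxnot : x ∉ closure (D l₀) := by
          intro hx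
          have : val l₀ ∈ SS x := Or.inr ⟨l₀, hp₀, h1s₀, hne₀, rfl, hx⟩
          have h2 : f x ≤ val l₀ := csInf_le (hSbdd x) this
          linarith
        have hNmem : (closure (D l₀))ᶜ ∈ 𝓝 x :=
          isClosed_closure.isOpen_compl.mem_nhds hxnot
        refine Filter.eventually_of_mem hNmem fun y hy => ?_
        have hfy : val l₀ ≤ f y := by
          refine le_csInf (hSne y) ?_
          rintro r (rfl | ⟨l, hp, h1s, hne, rfl, hycl⟩)
          · exact le_of_lt (val_lt_one l₀ hp₀ h1s₀)
          · by_contra h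
            push_neg at h
            have hsub : D l ⊆ D l₀ :=
              Dset_mono hU2 hU3 l₀ l hp hp₀ h1s h1s₀ h
            exact hy (closure_mono hsub hycl)
        linarith
    refine (hup.and hlow).mono fun y ⟨h1, h2⟩ => ?_
    rw [Real.dist_eq, abs_sub_lt_iff]
    constructor <;> linarith
  -- assemble the Urysohn function
  refine ⟨fun y => ⟨f (x₀⁻¹ * y), hf0 _, hf1 _⟩, ?_, ?_, ?_⟩
  · exact Continuous.subtype_mk (hfcont.comp (continuous_const.mul continuous_id)) _
  · apply Subtype.ext
    show f (x₀⁻¹ * x₀) = 0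
    rw [inv_mul_cancel]
    exact hfone
  · intro k hk
    apply Subtype.ext
    show f (x₀⁻¹ * k) = 1
    refine hfK _ ?_
    intro hO
    have : x₀ * (x₀⁻¹ * k) ∈ Kᶜ := hO
    rw [mul_inv_cancel_left] at this
    exact this hk
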